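/- arXiv:1812.08997 — 2 statements merged into one kernel-verified Lean document; each statement's English description precedes it below -/
import Mathlib

section
/- Double robustness of the weight-corrected variance-reduced gradient (Theorem 1): Let n ≥ 1 and let p, q : Fin n → ℝ be probability mass functions (nonnegative, each summing to 1) with q i > 0 for every i. Let F, G : Fin n → ℝ^d be vector-valued functions, let w : Fin n → ℝ be a weight function, and set ḡ = ∑_i p i • G i. If either (∀ i, w i = p i / q i) or (∀ i, G i = F i), then the expectation under q of the doubly robust estimator equals the target expectation under p; that is, ∑_i q i • (w i • (F i - G i) + ḡ) = ∑_i p i • F i. -/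
theorem sdrg_double_robustness
    (n d : ℕ) (hn : 1 ≤ n)
    (p q : Fin n → ℝ)
    (hp0 : ∀ i, 0 ≤ p i) (hp1 : ∑ i, p i = 1)
    (hq0 : ∀ i, 0 ≤ q i) (hq1 : ∑ i, q i = 1)
    (hqpos : ∀ i, 0 < q i)
    (F G : Fin n → Fin d → ℝ) (w : Fin n → ℝ)
    (gbar : Fin d → ℝ) (hgbar : gbar = ∑ i, p i • G i)
    (h : (∀ i, w i = p i / q i) ∨ (∀ i, G i = F i)) :
    ∑ i, q i • (w i • (F i - G i) + gbar) = ∑ i, p i • F i := by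
  subst hgbar
  funext j
  simp only [Finset.sum_apply, Pi.add_apply, Pi.smul_apply, Pi.sub_apply, smul_eq_mul]
  rcases h with h | h
  · have hw : ∀ i, q i * (w i * (F i j - G i j)) = p i * F i j - p i * G i j := by
      intro i
      have hne := (hqpos i).ne'
      rw [h i]
      field_simp
    simp only [mul_add, hw, Finset.sum_add_distrib]
    rw [Finset.sum_sub_distrib, ← Finset.sum_mul, hq1, one_mul]
    ring
  · simp only [h, sub_self, mul_zero, zero_mul, zero_add]
    rw [← Finset.sum_mul, hq1, one_mul]
end

section
/- Reduction of the weight-corrected control-variate update to the momentum update (Proposition 1): Let η, γ : ℝ with η ≠ 1, and let ∇f, Δprev ∈ ℝ^d. Setting the importance weight to the constant η and the control variate and its expectation both equal to c = (γ / (1 - η)) • Δprev, the doubly robust update η • ∇f - η • c + c equals the momentum update η • ∇f + γ • Δprev. -/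
theorem sdrg_reduces_to_momentum
    (d : ℕ) (η γ : ℝ) (hη : η ≠ 1)
    (gradf Δprev : Fin d → ℝ)
    (c : Fin d → ℝ) (hc : c = (γ / (1 - η)) • Δprev) :
    η • gradf - η • c + c = η • gradf + γ • Δprev := by
  subst hc
  funext i
  have h1 : (1 : ℝ) - η ≠ 0 := by intro h; apply hη; linarith
  simp [Pi.add_apply, Pi.sub_apply, Pi.smul_apply, smul_eq_mul]
  field_simp
  ring
end
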